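/- Consider the four matrices in PGL₂(ℚ) represented by e = [[1,0],[0,1]], x = [[1, 1/2],[0,1]], y = [[1,0],[4,1]], and xy, taken modulo Γ₀(8). Then x² ∈ Γ₀(8), y² ∈ Γ₀(8), and (xy)² ∈ Γ₀(8), and the images of x and y generate a group isomorphic to the Klein four-group C₂ × C₂ in the quotient ⟨Γ₀(8), x, y⟩/Γ₀(8). -/

import Mathlib

/-- Membership in (the image of) `Γ₀(N)` inside the units of `M₂(ℚ)`:
`A` comes from an integral matrix of determinant `1` whose lower-left entry
is divisible by `N`. -/
def Gamma0Set (N : ℕ) : Set (Matrix (Fin 2) (Fin 2) ℚ)ˣ :=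
  {A | ∃ m : Matrix (Fin 2) (Fin 2) ℤ, m.det = 1 ∧ (N : ℤ) ∣ m 1 0 ∧
    m.map (Int.cast : ℤ → ℚ) = (A : Matrix (Fin 2) (Fin 2) ℚ)}

/-- `x = [[1,1/2],[0,1]]` as a unit of `M₂(ℚ)`. -/
noncomputable def xUnit42 : (Matrix (Fin 2) (Fin 2) ℚ)ˣ :=
  ⟨!![1, 1/2; 0, 1], !![1, -(1/2); 0, 1],
    by ext i j; fin_cases i <;> fin_cases j <;>
      simp [Matrix.mul_apply, Fin.sum_univ_two, Matrix.one_apply],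
    by ext i j; fin_cases i <;> fin_cases j <;>
      simp [Matrix.mul_apply, Fin.sum_univ_two, Matrix.one_apply]⟩

/-- `y = [[1,0],[4,1]]` as a unit of `M₂(ℚ)`. -/
noncomputable def yUnit42 : (Matrix (Fin 2) (Fin 2) ℚ)ˣ :=
  ⟨!![1, 0; 4, 1], !![1, 0; -4, 1],
    by ext i j; fin_cases i <;> fin_cases j <;>
      simp [Matrix.mul_apply, Fin.sum_univ_two, Matrix.one_apply],
    by ext i j; fin_cases i <;> fin_cases j <;>
      simp [Matrix.mul_apply, Fin.sum_univ_two, Matrix.one_apply]⟩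

/-- `Γ₀(4|2)` membership predicate. -/
def S42 (A : (Matrix (Fin 2) (Fin 2) ℚ)ˣ) : Prop :=
  ∃ p : ℤ × ℤ × ℤ × ℤ, p.1 * p.2.2.2 - 2 * p.2.1 * p.2.2.1 = 1 ∧
    (A : Matrix (Fin 2) (Fin 2) ℚ) =
      !![(p.1 : ℚ), (p.2.1 : ℚ)/2; 4*(p.2.2.1 : ℚ), (p.2.2.2 : ℚ)]

lemma S42_unique {A : (Matrix (Fin 2) (Fin 2) ℚ)ˣ} {p q : ℤ × ℤ × ℤ × ℤ}
    (hp : (A : Matrix (Fin 2) (Fin 2) ℚ) =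
      !![(p.1 : ℚ), (p.2.1 : ℚ)/2; 4*(p.2.2.1 : ℚ), (p.2.2.2 : ℚ)])
    (hq : (A : Matrix (Fin 2) (Fin 2) ℚ) =
      !![(q.1 : ℚ), (q.2.1 : ℚ)/2; 4*(q.2.2.1 : ℚ), (q.2.2.2 : ℚ)]) : p = q := by
  obtain ⟨a, b, c, d⟩ := p
  obtain ⟨a', b', c', d'⟩ := q
  rw [hp] at hq
  have h00 := congrFun (congrFun hq 0) 0
  have h01 := congrFun (congrFun hq 0) 1
  have h10 := congrFun (congrFun hq 1) 0
  have h11 := congrFun (congrFun hq 1) 1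
  simp at h00 h01 h10 h11
  have hb : b = b' := by
    have : (b:ℚ) = b' := by rw [h01]
    exact_mod_cast this
  simp_all

/-- `Γ₀(4|2)` as a subgroup of the units of `M₂(ℚ)`. -/
def SG42 : Subgroup (Matrix (Fin 2) (Fin 2) ℚ)ˣ where
  carrier := {A | S42 A}
  one_mem' := ⟨(1, 0, 0, 1), by norm_num, by
    ext i j; fin_cases i <;> fin_cases j <;>
      simp [Matrix.one_apply]⟩
  mul_mem' := by
    rintro A B ⟨⟨a, b, c, d⟩, h1, hA⟩ ⟨⟨a', b', c', d'⟩, h2, hB⟩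
    refine ⟨(a*a' + 2*b*c', a*b' + b*d', c*a' + d*c', 2*c*b' + d*d'), ?_, ?_⟩
    · simp only at h1 h2 ⊢
      linear_combination (a' * d' - 2 * b' * c') * h1 + h2
    · rw [Units.val_mul, hA, hB]
      ext i j; fin_cases i <;> fin_cases j <;>
        (simp [Matrix.mul_apply, Fin.sum_univ_two]; push_cast; ring)
  inv_mem' := by
    rintro A ⟨⟨a, b, c, d⟩, h1, hA⟩
    refine ⟨(d, -b, -c, a), by simp only at h1 ⊢; linarith, ?_⟩
    have hdet : (a : ℚ) * d - 2 * b * c = 1 := by exact_mod_cast h1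
    have hB : (A : Matrix (Fin 2) (Fin 2) ℚ) *
        !![(d : ℚ), (-b : ℤ)/2; 4*((-c : ℤ) : ℚ), (a : ℚ)] = 1 := by
      rw [hA]
      ext i j; fin_cases i <;> fin_cases j <;>
        (simp [Matrix.mul_apply, Fin.sum_univ_two, Matrix.one_apply]; push_cast; ring_nf;
         try linarith)
    calc (↑A⁻¹ : Matrix (Fin 2) (Fin 2) ℚ)
        = ↑A⁻¹ * ((A : Matrix (Fin 2) (Fin 2) ℚ) *
            !![(d : ℚ), (-b : ℤ)/2; 4*((-c : ℤ) : ℚ), (a : ℚ)]) := by rw [hB, mul_one]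
      _ = (↑A⁻¹ * (A : Matrix (Fin 2) (Fin 2) ℚ)) *
            !![(d : ℚ), (-b : ℤ)/2; 4*((-c : ℤ) : ℚ), (a : ℚ)] := by rw [mul_assoc]
      _ = !![(d : ℚ), (-b : ℤ)/2; 4*((-c : ℤ) : ℚ), (a : ℚ)] := by
            rw [← Units.val_mul, inv_mul_cancel, Units.val_one, one_mul]

open Classical in
/-- A chosen integral representative tuple `(a,b,c,d)` for `A ∈ Γ₀(4|2)`. -/
noncomputable def rep42 (A : (Matrix (Fin 2) (Fin 2) ℚ)ˣ) : ℤ × ℤ × ℤ × ℤ :=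
  if h : S42 A then h.choose else (1, 0, 0, 1)

lemma rep42_spec {A : (Matrix (Fin 2) (Fin 2) ℚ)ˣ} (h : S42 A) :
    (rep42 A).1 * (rep42 A).2.2.2 - 2 * (rep42 A).2.1 * (rep42 A).2.2.1 = 1 ∧
    (A : Matrix (Fin 2) (Fin 2) ℚ) =
      !![((rep42 A).1 : ℚ), ((rep42 A).2.1 : ℚ)/2;
         4*((rep42 A).2.2.1 : ℚ), ((rep42 A).2.2.2 : ℚ)] := by
  classical rw [rep42, dif_pos h]; exact h.choose_spec

lemma rep42_eq {A : (Matrix (Fin 2) (Fin 2) ℚ)ˣ} {p : ℤ × ℤ × ℤ × ℤ}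
    (hdet : p.1 * p.2.2.2 - 2 * p.2.1 * p.2.2.1 = 1)
    (hA : (A : Matrix (Fin 2) (Fin 2) ℚ) =
      !![(p.1 : ℚ), (p.2.1 : ℚ)/2; 4*(p.2.2.1 : ℚ), (p.2.2.2 : ℚ)]) :
    rep42 A = p := by
  have h : S42 A := ⟨p, hdet, hA⟩
  exact S42_unique (rep42_spec h).2 hA

lemma zmod2_mul_eq_one {u v : ZMod 2} (h : u * v = 1) : u = 1 ∧ v = 1 := by
  revert h; revert u v; decide

/-- The homomorphism `Γ₀(4|2) → C₂ × C₂`, `[[a,b/2],[4c,d]] ↦ (b mod 2, c mod 2)`. -/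
noncomputable def ψ42 : SG42 →* Multiplicative (ZMod 2) × Multiplicative (ZMod 2) where
  toFun g := (Multiplicative.ofAdd (((rep42 g).2.1 : ZMod 2)),
              Multiplicative.ofAdd (((rep42 g).2.2.1 : ZMod 2)))
  map_one' := by
    have : rep42 (1 : (Matrix (Fin 2) (Fin 2) ℚ)ˣ) = (1, 0, 0, 1) := by
      apply rep42_eq (p := (1,0,0,1)) (by norm_num)
      ext i j; fin_cases i <;> fin_cases j <;> simp [Matrix.one_apply]
    simp [this]
  map_mul' := by
    rintro g h
    obtain ⟨h1, hAe⟩ := rep42_spec (g.2 : S42 (g : (Matrix (Fin 2) (Fin 2) ℚ)ˣ))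
    obtain ⟨h2, hBe⟩ := rep42_spec (h.2 : S42 (h : (Matrix (Fin 2) (Fin 2) ℚ)ˣ))
    set a := (rep42 (g : (Matrix (Fin 2) (Fin 2) ℚ)ˣ)).1 with ha_def
    set b := (rep42 (g : (Matrix (Fin 2) (Fin 2) ℚ)ˣ)).2.1 with hb_def
    set c := (rep42 (g : (Matrix (Fin 2) (Fin 2) ℚ)ˣ)).2.2.1 with hc_def
    set d := (rep42 (g : (Matrix (Fin 2) (Fin 2) ℚ)ˣ)).2.2.2 with hd_def
    set a' := (rep42 (h : (Matrix (Fin 2) (Fin 2) ℚ)ˣ)).1 with ha'_def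
    set b' := (rep42 (h : (Matrix (Fin 2) (Fin 2) ℚ)ˣ)).2.1 with hb'_def
    set c' := (rep42 (h : (Matrix (Fin 2) (Fin 2) ℚ)ˣ)).2.2.1 with hc'_def
    set d' := (rep42 (h : (Matrix (Fin 2) (Fin 2) ℚ)ˣ)).2.2.2 with hd'_def
    have hcoe : ((g * h : SG42) : (Matrix (Fin 2) (Fin 2) ℚ)ˣ) =
        (g : (Matrix (Fin 2) (Fin 2) ℚ)ˣ) * (h : (Matrix (Fin 2) (Fin 2) ℚ)ˣ) := rfl
    have hprod : rep42 ((g * h : SG42) : (Matrix (Fin 2) (Fin 2) ℚ)ˣ) =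
        (a*a' + 2*b*c', a*b' + b*d', c*a' + d*c', 2*c*b' + d*d') := by
      apply rep42_eq
      · simp only; linear_combination (a' * d' - 2 * b' * c') * h1 + h2
      · rw [hcoe, Units.val_mul, hAe, hBe]
        ext i j; fin_cases i <;> fin_cases j <;>
          (simp [Matrix.mul_apply, Fin.sum_univ_two]; push_cast; ring)
    have hmod1 : ((a : ZMod 2)) * (d : ZMod 2) = 1 := by
      have h1' : ((a * d - 2 * b * c : ℤ) : ZMod 2) = ((1 : ℤ) : ZMod 2) := by rw [h1]
      push_cast at h1'
      have h20 : (2 : ZMod 2) = 0 := rfl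
      linear_combination h1' + (b : ZMod 2) * (c : ZMod 2) * h20
    have hmod2 : ((a' : ZMod 2)) * (d' : ZMod 2) = 1 := by
      have h2' : ((a' * d' - 2 * b' * c' : ℤ) : ZMod 2) = ((1 : ℤ) : ZMod 2) := by rw [h2]
      push_cast at h2'
      have h20 : (2 : ZMod 2) = 0 := rfl
      linear_combination h2' + (b' : ZMod 2) * (c' : ZMod 2) * h20
    obtain ⟨hA1, hD1⟩ := zmod2_mul_eq_one hmod1
    obtain ⟨hA2, hD2⟩ := zmod2_mul_eq_one hmod2
    show (Multiplicative.ofAdd (((rep42 ((g * h : SG42) : (Matrix (Fin 2) (Fin 2) ℚ)ˣ)).2.1 : ZMod 2)),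
          Multiplicative.ofAdd (((rep42 ((g * h : SG42) : (Matrix (Fin 2) (Fin 2) ℚ)ˣ)).2.2.1 : ZMod 2))) =
        (Multiplicative.ofAdd ((b : ZMod 2)), Multiplicative.ofAdd ((c : ZMod 2))) *
        (Multiplicative.ofAdd ((b' : ZMod 2)), Multiplicative.ofAdd ((c' : ZMod 2)))
    rw [hprod]
    refine Prod.ext ?_ ?_ <;>
      simp only [Prod.fst_mul, Prod.snd_mul, ← ofAdd_add] <;> congr 1 <;> push_cast
    · linear_combination (b' : ZMod 2) * hA1 + (b : ZMod 2) * hD2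
    · linear_combination (c : ZMod 2) * hA2 + (c' : ZMod 2) * hD1

lemma xUnit42_mem : S42 xUnit42 := by
  refine ⟨(1, 1, 0, 1), by norm_num, ?_⟩
  have h : (xUnit42 : Matrix (Fin 2) (Fin 2) ℚ) = !![1, 1/2; 0, 1] := rfl
  rw [h]; norm_num

lemma yUnit42_mem : S42 yUnit42 := by
  refine ⟨(1, 0, 1, 1), by norm_num, ?_⟩
  have h : (yUnit42 : Matrix (Fin 2) (Fin 2) ℚ) = !![1, 0; 4, 1] := rfl
  rw [h]; norm_num

lemma gamma8_subset_S42 : Gamma0Set 8 ⊆ {A | S42 A} := by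
  rintro A ⟨m, hdet, ⟨k, hk⟩, hmap⟩
  refine ⟨(m 0 0, 2 * m 0 1, 2 * k, m 1 1), ?_, ?_⟩
  · simp only
    rw [Matrix.det_fin_two] at hdet
    linear_combination hdet + (m 0 1) * hk
  · rw [← hmap]
    ext i j; fin_cases i <;> fin_cases j <;>
      simp [Matrix.map_apply, hk] <;> push_cast <;> ring

lemma mem_gamma8_iff {A : (Matrix (Fin 2) (Fin 2) ℚ)ˣ} (h : S42 A) :
    A ∈ Gamma0Set 8 ↔ (((rep42 A).2.1 : ZMod 2) = 0 ∧ ((rep42 A).2.2.1 : ZMod 2) = 0) := by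
  obtain ⟨hdet, hAe⟩ := rep42_spec h
  set a := (rep42 A).1
  set b := (rep42 A).2.1
  set c := (rep42 A).2.2.1
  set d := (rep42 A).2.2.2
  rw [ZMod.intCast_zmod_eq_zero_iff_dvd, ZMod.intCast_zmod_eq_zero_iff_dvd]
  constructor
  · rintro ⟨m, hmdet, ⟨k, hk⟩, hmap⟩
    have h01 : ((m 0 1 : ℤ) : ℚ) = (b : ℚ) / 2 := by
      have := congrFun (congrFun (hmap.trans hAe) 0) 1
      simpa [Matrix.map_apply] using this
    have h10 : ((m 1 0 : ℤ) : ℚ) = 4 * (c : ℚ) := by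
      have := congrFun (congrFun (hmap.trans hAe) 1) 0
      simpa [Matrix.map_apply] using this
    constructor
    · refine ⟨m 0 1, ?_⟩
      have : (b : ℚ) = 2 * (m 0 1 : ℤ) := by rw [h01]; ring
      exact_mod_cast this
    · refine ⟨k, ?_⟩
      have : (4 : ℚ) * c = 4 * (2 * k) := by
        rw [← h10, hk]; push_cast; ring
      have h4 : (c : ℚ) = 2 * k := by linarith
      exact_mod_cast h4
  · rintro ⟨⟨β, hβ⟩, ⟨γ, hγ⟩⟩
    refine ⟨!![a, β; 8 * γ, d], ?_, ⟨γ, by simp⟩, ?_⟩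
    · rw [Matrix.det_fin_two_of]
      rw [hβ, hγ] at hdet
      linear_combination hdet
    · rw [hAe]
      ext i j; fin_cases i <;> fin_cases j <;>
        simp [Matrix.map_apply, hβ, hγ] <;> push_cast <;> ring

lemma closure_le_SG42 :
    Subgroup.closure (Gamma0Set 8 ∪ {xUnit42, yUnit42}) ≤ SG42 := by
  rw [Subgroup.closure_le]
  rintro A (hA | hA)
  · exact gamma8_subset_S42 hA
  · rcases hA with rfl | rfl
    · exact xUnit42_mem
    · exact yUnit42_mem

lemma rep42_x : rep42 xUnit42 = (1, 1, 0, 1) := by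
  apply rep42_eq (p := (1,1,0,1)) (by norm_num)
  have h : (xUnit42 : Matrix (Fin 2) (Fin 2) ℚ) = !![1, 1/2; 0, 1] := rfl
  rw [h]; norm_num

lemma rep42_y : rep42 yUnit42 = (1, 0, 1, 1) := by
  apply rep42_eq (p := (1,0,1,1)) (by norm_num)
  have h : (yUnit42 : Matrix (Fin 2) (Fin 2) ℚ) = !![1, 0; 4, 1] := rfl
  rw [h]; norm_num


/-- `Γ₀(4|2)/Γ₀(8) ≅ C₂ × C₂`: with `x = [[1,1/2],[0,1]]` and
`y = [[1,0],[4,1]]` one has `x², y², (xy)² ∈ Γ₀(8)` while `x, y, xy ∉ Γ₀(8)`,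
and there is a homomorphism from `⟨Γ₀(8), x, y⟩` onto the Klein four-group
`C₂ × C₂` whose kernel is exactly `Γ₀(8)` (so the quotient, generated by the
images of `x` and `y`, is isomorphic to `C₂ × C₂`). -/
theorem gamma0_4_2_mod_gamma0_8_klein_four :
    xUnit42 ^ 2 ∈ Gamma0Set 8 ∧ yUnit42 ^ 2 ∈ Gamma0Set 8 ∧
    (xUnit42 * yUnit42) ^ 2 ∈ Gamma0Set 8 ∧
    xUnit42 ∉ Gamma0Set 8 ∧ yUnit42 ∉ Gamma0Set 8 ∧ xUnit42 * yUnit42 ∉ Gamma0Set 8 ∧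
    ∃ φ : (Subgroup.closure (Gamma0Set 8 ∪ {xUnit42, yUnit42}) :
            Subgroup (Matrix (Fin 2) (Fin 2) ℚ)ˣ) →*
          Multiplicative (ZMod 2) × Multiplicative (ZMod 2),
      Function.Surjective φ ∧
      ∀ g, φ g = 1 ↔ (g : (Matrix (Fin 2) (Fin 2) ℚ)ˣ) ∈ Gamma0Set 8 := by
  have hxv : (xUnit42 : Matrix (Fin 2) (Fin 2) ℚ) = !![1, 1/2; 0, 1] := rfl
  have hyv : (yUnit42 : Matrix (Fin 2) (Fin 2) ℚ) = !![1, 0; 4, 1] := rfl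
  have hxyv : ((xUnit42 * yUnit42 : _) : Matrix (Fin 2) (Fin 2) ℚ) = !![3, 1/2; 4, 1] := by
    rw [Units.val_mul, hxv, hyv]
    ext i j; fin_cases i <;> fin_cases j <;>
      (simp [Matrix.mul_apply, Fin.sum_univ_two]; try norm_num)
  refine ⟨?_, ?_, ?_, ?_, ?_, ?_, ?_⟩
  · -- x² ∈ Γ₀(8)
    refine ⟨!![1, 1; 0, 1], by simp [Matrix.det_fin_two_of], ⟨0, by simp⟩, ?_⟩
    rw [sq, Units.val_mul, hxv]
    ext i j; fin_cases i <;> fin_cases j <;>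
      (simp [Matrix.map_apply, Matrix.mul_apply, Fin.sum_univ_two]; try norm_num)
  · -- y² ∈ Γ₀(8)
    refine ⟨!![1, 0; 8, 1], by simp [Matrix.det_fin_two_of], ⟨1, by norm_num⟩, ?_⟩
    rw [sq, Units.val_mul, hyv]
    ext i j; fin_cases i <;> fin_cases j <;>
      (simp [Matrix.map_apply, Matrix.mul_apply, Fin.sum_univ_two]; try norm_num)
  · -- (xy)² ∈ Γ₀(8)
    refine ⟨!![11, 2; 16, 3], by norm_num [Matrix.det_fin_two_of], ⟨2, by norm_num⟩, ?_⟩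
    rw [sq, Units.val_mul, hxyv]
    ext i j; fin_cases i <;> fin_cases j <;>
      (simp [Matrix.map_apply, Matrix.mul_apply, Fin.sum_univ_two]; try norm_num)
  · -- x ∉ Γ₀(8)
    rintro ⟨m, hdet, hdvd, hmap⟩
    have h01 := congrFun (congrFun (hmap.trans hxv) 0) 1
    simp [Matrix.map_apply] at h01
    have h2 : ((2 * m 0 1 : ℤ) : ℚ) = 1 := by push_cast; linarith
    have h3 : (2 * m 0 1 : ℤ) = 1 := by exact_mod_cast h2
    omega
  · -- y ∉ Γ₀(8)
    rintro ⟨m, hdet, ⟨k, hk⟩, hmap⟩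
    have h10 := congrFun (congrFun (hmap.trans hyv) 1) 0
    simp [Matrix.map_apply] at h10
    have h3 : (m 1 0 : ℤ) = 4 := by exact_mod_cast h10
    omega
  · -- xy ∉ Γ₀(8)
    rintro ⟨m, hdet, hdvd, hmap⟩
    have h01 := congrFun (congrFun (hmap.trans hxyv) 0) 1
    simp [Matrix.map_apply] at h01
    have h2 : ((2 * m 0 1 : ℤ) : ℚ) = 1 := by push_cast; linarith
    have h3 : (2 * m 0 1 : ℤ) = 1 := by exact_mod_cast h2
    omega
  · -- the homomorphism
    refine ⟨ψ42.comp (Subgroup.inclusion closure_le_SG42), ?_, ?_⟩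
    · -- surjective
      have hxmem : xUnit42 ∈ Subgroup.closure (Gamma0Set 8 ∪ {xUnit42, yUnit42}) :=
        Subgroup.subset_closure (Or.inr (Or.inl rfl))
      have hymem : yUnit42 ∈ Subgroup.closure (Gamma0Set 8 ∪ {xUnit42, yUnit42}) :=
        Subgroup.subset_closure (Or.inr (Or.inr rfl))
      have hφx : (ψ42.comp (Subgroup.inclusion closure_le_SG42)) ⟨xUnit42, hxmem⟩ =
          (Multiplicative.ofAdd (1 : ZMod 2), Multiplicative.ofAdd (0 : ZMod 2)) := by
        show (Multiplicative.ofAdd (((rep42 xUnit42).2.1 : ZMod 2)),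
              Multiplicative.ofAdd (((rep42 xUnit42).2.2.1 : ZMod 2))) = _
        rw [rep42_x]; rfl
      have hφy : (ψ42.comp (Subgroup.inclusion closure_le_SG42)) ⟨yUnit42, hymem⟩ =
          (Multiplicative.ofAdd (0 : ZMod 2), Multiplicative.ofAdd (1 : ZMod 2)) := by
        show (Multiplicative.ofAdd (((rep42 yUnit42).2.1 : ZMod 2)),
              Multiplicative.ofAdd (((rep42 yUnit42).2.2.1 : ZMod 2))) = _
        rw [rep42_y]; rfl
      intro w
      have hcases : ∀ w : Multiplicative (ZMod 2) × Multiplicative (ZMod 2),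
          w = 1 ∨ w = (Multiplicative.ofAdd (1 : ZMod 2), Multiplicative.ofAdd (0 : ZMod 2)) ∨
          w = (Multiplicative.ofAdd (0 : ZMod 2), Multiplicative.ofAdd (1 : ZMod 2)) ∨
          w = (Multiplicative.ofAdd (1 : ZMod 2), Multiplicative.ofAdd (1 : ZMod 2)) := by
        decide
      rcases hcases w with rfl | rfl | rfl | rfl
      · exact ⟨1, map_one _⟩
      · exact ⟨⟨xUnit42, hxmem⟩, hφx⟩
      · exact ⟨⟨yUnit42, hymem⟩, hφy⟩
      · refine ⟨⟨xUnit42, hxmem⟩ * ⟨yUnit42, hymem⟩, ?_⟩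
        rw [map_mul, hφx, hφy]
        rfl
    · -- kernel
      intro g
      have hS : S42 (g : (Matrix (Fin 2) (Fin 2) ℚ)ˣ) := closure_le_SG42 g.2
      rw [mem_gamma8_iff hS]
      show (Multiplicative.ofAdd (((rep42 (g : (Matrix (Fin 2) (Fin 2) ℚ)ˣ)).2.1 : ZMod 2)),
            Multiplicative.ofAdd (((rep42 (g : (Matrix (Fin 2) (Fin 2) ℚ)ˣ)).2.2.1 : ZMod 2))) =
          1 ↔ _
      rw [Prod.ext_iff]
      simp [Prod.ext_iff]
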